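/- Let n ≥ 2, d ∈ [0,1), and λ be a 1-periodic C^n function on ℝ with ‖∂ₓλ‖_∞ ≤ d. Then, writing (I+λ)^{-1} for the inverse diffeomorphism of x ↦ x + λ(x), there exists a constant c depending only on n, d and ‖∂ₓ^{n-1}λ‖_∞ such that ‖∂ₓⁿ(I+λ)^{-1}‖_∞ ≤ c·‖∂ₓⁿλ‖_∞. -/

import Mathlib

open Function Set

private lemma itd_const (r : ℕ) (c : ℝ) :
    iteratedDeriv (r + 1) (fun _ : ℝ => c) = fun _ => 0 := by
  induction r generalizing c with
  | zero => rw [iteratedDeriv_one]; exact funext fun x => deriv_const x c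
  | succ r ih =>
      rw [iteratedDeriv_succ']
      have : deriv (fun _ : ℝ => c) = fun _ : ℝ => (0 : ℝ) := funext fun x => deriv_const x c
      rw [this, ih 0]

private lemma itd_id (m : ℕ) (hm : 2 ≤ m) :
    iteratedDeriv m (fun y : ℝ => y) = fun _ => 0 := by
  obtain ⟨r, rfl⟩ : ∃ r, m = r + 2 := ⟨m - 2, by omega⟩
  rw [show r + 2 = (r + 1) + 1 from rfl, iteratedDeriv_succ']
  have : deriv (fun y : ℝ => y) = fun _ : ℝ => (1 : ℝ) := funext fun x => deriv_id x
  rw [this, itd_const]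

private lemma periodic_deriv' {f : ℝ → ℝ} (hf : Function.Periodic f 1) :
    Function.Periodic (deriv f) 1 := by
  intro x
  have h : (fun y => f (y + 1)) = f := funext fun y => hf y
  rw [← deriv_comp_add_const f 1 x, h]

private lemma periodic_itd {f : ℝ → ℝ} (hf : Function.Periodic f 1) (k : ℕ) :
    Function.Periodic (iteratedDeriv k f) 1 := by
  induction k with
  | zero => simpa using hf
  | succ k ih => rw [iteratedDeriv_succ]; exact periodic_deriv' ih

private lemma periodic_reduce {f : ℝ → ℝ} (hf : Function.Periodic f 1) (x : ℝ) (z : ℤ) :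
    f (x - z) = f x := by
  simpa using hf.sub_int_mul_eq (x := x) z

private lemma bdd_abs {f : ℝ → ℝ} (hc : Continuous f) (hp : Function.Periodic f 1) :
    BddAbove (Set.range fun y => |f y|) := by
  have hsub : (Set.range fun y => |f y|) ⊆ (fun y => |f y|) '' Set.Icc (0 : ℝ) 1 := by
    rintro _ ⟨y, rfl⟩
    refine ⟨Int.fract y, ⟨Int.fract_nonneg y, (Int.fract_lt_one y).le⟩, ?_⟩
    have : Int.fract y = y - (⌊y⌋ : ℤ) := rfl
    simp only [this, periodic_reduce hp]
  exact (((isCompact_Icc).image (continuous_abs.comp hc)).bddAbove).mono hsub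

private lemma exists_deriv_zero {F : ℝ → ℝ} (hF : Differentiable ℝ F)
    (hp : Function.Periodic F 1) : ∃ x₀, deriv F x₀ = 0 := by
  obtain ⟨x₀, hx₀, hmax⟩ := isCompact_Icc.exists_isMaxOn (Set.nonempty_Icc.mpr zero_le_one)
    hF.continuous.continuousOn
  refine ⟨x₀, IsLocalMax.deriv_eq_zero ?_⟩
  have hglob : ∀ y, F y ≤ F x₀ := by
    intro y
    have h1 : F y = F (Int.fract y) := by
      have : Int.fract y = y - (⌊y⌋ : ℤ) := rfl
      rw [this, periodic_reduce hp]
    rw [h1]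
    exact hmax ⟨Int.fract_nonneg y, (Int.fract_lt_one y).le⟩
  exact Filter.Eventually.of_forall hglob

private lemma contdiff_deriv_of {p : ℕ} {f : ℝ → ℝ} (h : ContDiff ℝ (p + 1 : ℕ) f) :
    ContDiff ℝ (p : ℕ) (deriv f) := by
  have := ContDiff.iterate_deriv' p 1 h
  rwa [Function.iterate_one] at this

private lemma contdiff_itd {k m : ℕ} {f : ℝ → ℝ} (h : ContDiff ℝ (k + m : ℕ) f) :
    ContDiff ℝ (k : ℕ) (iteratedDeriv m f) := by
  rw [iteratedDeriv_eq_iterate]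
  exact ContDiff.iterate_deriv' k m h

private lemma chain_step {n : ℕ} {l : ℝ → ℝ} (hl : ContDiff ℝ (n : ℕ) l)
    (hper : Function.Periodic l 1) (q : ℕ) (hq : q + 2 ≤ n) (x : ℝ) :
    |iteratedDeriv (q + 1) l x| ≤ ⨆ y, |iteratedDeriv (q + 2) l y| := by
  have hF : Differentiable ℝ (iteratedDeriv q l) := by
    have : ContDiff ℝ (1 : ℕ) (iteratedDeriv q l) :=
      contdiff_itd (hl.of_le (by exact_mod_cast (by omega : 1 + q ≤ n)))
    exact this.differentiable (by simp)
  have hf : Differentiable ℝ (iteratedDeriv (q + 1) l) := by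
    have : ContDiff ℝ (1 : ℕ) (iteratedDeriv (q + 1) l) :=
      contdiff_itd (hl.of_le (by exact_mod_cast (by omega : 1 + (q + 1) ≤ n)))
    exact this.differentiable (by simp)
  have hcont2 : Continuous (iteratedDeriv (q + 2) l) := by
    have : ContDiff ℝ (0 : ℕ) (iteratedDeriv (q + 2) l) :=
      contdiff_itd (hl.of_le (by exact_mod_cast (by omega : 0 + (q + 2) ≤ n)))
    exact this.continuous
  obtain ⟨x₀, hx₀⟩ := exists_deriv_zero hF (periodic_itd hper q)
  have hfx₀ : iteratedDeriv (q + 1) l x₀ = 0 := by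
    rw [iteratedDeriv_succ]; exact hx₀
  have hbdd : BddAbove (Set.range fun y => |iteratedDeriv (q + 2) l y|) :=
    bdd_abs hcont2 (periodic_itd hper (q + 2))
  set T := ⨆ y, |iteratedDeriv (q + 2) l y| with hT
  have hTle : ∀ y, |iteratedDeriv (q + 2) l y| ≤ T := fun y => le_ciSup hbdd y
  have hT0 : 0 ≤ T := le_trans (abs_nonneg _) (hTle 0)
  set x' := x - (⌊x - x₀⌋ : ℤ) with hx'
  have hfx' : iteratedDeriv (q + 1) l x' = iteratedDeriv (q + 1) l x :=
    periodic_reduce (periodic_itd hper (q + 1)) x ⌊x - x₀⌋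
  have hderiv : ∀ y : ℝ, deriv (iteratedDeriv (q + 1) l) y = iteratedDeriv (q + 2) l y := by
    intro y
    conv_rhs => rw [show q + 2 = (q + 1) + 1 from rfl, iteratedDeriv_succ]
  have hmvt : ‖iteratedDeriv (q + 1) l x' - iteratedDeriv (q + 1) l x₀‖ ≤ T * ‖x' - x₀‖ := by
    refine Convex.norm_image_sub_le_of_norm_deriv_le (s := Set.univ)
      (fun y _ => (hf y)) (fun y _ => ?_) convex_univ (Set.mem_univ x₀) (Set.mem_univ x')
    rw [hderiv y]; exact (hTle y)
  have hdist : ‖x' - x₀‖ ≤ 1 := by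
    have h1 : x' - x₀ = Int.fract (x - x₀) := by
      rw [hx']; rw [Int.fract]; ring
    rw [h1, Real.norm_eq_abs, abs_of_nonneg (Int.fract_nonneg _)]
    exact (Int.fract_lt_one _).le
  calc |iteratedDeriv (q + 1) l x| = ‖iteratedDeriv (q + 1) l x' - iteratedDeriv (q + 1) l x₀‖ := by
        rw [hfx₀, sub_zero, hfx', Real.norm_eq_abs]
    _ ≤ T * ‖x' - x₀‖ := hmvt
    _ ≤ T * 1 := mul_le_mul_of_nonneg_left hdist hT0
    _ = T := mul_one T

private lemma chain {n : ℕ} {l : ℝ → ℝ} (hl : ContDiff ℝ (n : ℕ) l)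
    (hper : Function.Periodic l 1) (k m : ℕ) (hk : 1 ≤ k) (hkm : k ≤ m) (hmn : m ≤ n)
    (x : ℝ) : |iteratedDeriv k l x| ≤ ⨆ y, |iteratedDeriv m l y| := by
  induction m with
  | zero => omega
  | succ m ih =>
      have hbdd : BddAbove (Set.range fun y => |iteratedDeriv (m + 1) l y|) := by
        refine bdd_abs ?_ (periodic_itd hper (m + 1))
        have : ContDiff ℝ (0 : ℕ) (iteratedDeriv (m + 1) l) :=
          contdiff_itd (hl.of_le (by exact_mod_cast (by omega : 0 + (m + 1) ≤ n)))
        exact this.continuous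
      rcases Nat.lt_or_ge k (m + 1) with h | h
      · have hkm' : k ≤ m := by omega
        have h1 := ih hkm' (by omega)
        refine h1.trans (ciSup_le fun y => ?_)
        obtain ⟨q, rfl⟩ : ∃ q, m = q + 1 := ⟨m - 1, by omega⟩
        exact chain_step hl hper q (by omega) y
      · have : k = m + 1 := by omega
        subst this
        exact le_ciSup hbdd x

private lemma deriv_id_add {l g : ℝ → ℝ} (hl : Differentiable ℝ l) (hg : Differentiable ℝ g)
    (hid : ∀ x, g x + l (g x) = x) (x : ℝ) :
    deriv g x * (1 + deriv l (g x)) = 1 := by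
  have h1 : HasDerivAt g (deriv g x) x := (hg x).hasDerivAt
  have h2 : HasDerivAt l (deriv l (g x)) (g x) := (hl (g x)).hasDerivAt
  have h3 : HasDerivAt (fun y => l (g y)) (deriv l (g x) * deriv g x) x := h2.comp x h1
  have h4 : HasDerivAt (fun y => g y + l (g y)) (deriv g x + deriv l (g x) * deriv g x) x :=
    h1.add h3
  have h5 : (fun y => g y + l (g y)) = fun y => y := funext hid
  rw [h5] at h4
  have h6 := h4.unique (hasDerivAt_id x)
  linarith [h6]

private lemma abs_deriv_g_le {d : ℝ} (hd : d < 1) {l g : ℝ → ℝ}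
    (hl : Differentiable ℝ l) (hg : Differentiable ℝ g)
    (hld : ∀ x, |deriv l x| ≤ d) (hid : ∀ x, g x + l (g x) = x) (x : ℝ) :
    |deriv g x| ≤ (1 - d)⁻¹ := by
  have h := deriv_id_add hl hg hid x
  have hda := abs_le.mp (hld (g x))
  have h1d : (0 : ℝ) < 1 - d := by linarith
  have habs : |deriv g x| * (1 - d) ≤ 1 := by
    have hge : (1 - d) ≤ |1 + deriv l (g x)| := by
      rw [abs_of_pos (by linarith [hda.1] : (0:ℝ) < 1 + deriv l (g x))]
      linarith [hda.1]
    calc |deriv g x| * (1 - d) ≤ |deriv g x| * |1 + deriv l (g x)| :=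
          mul_le_mul_of_nonneg_left hge (abs_nonneg _)
      _ = |deriv g x * (1 + deriv l (g x))| := (abs_mul _ _).symm
      _ = 1 := by rw [h]; exact abs_one
  calc |deriv g x| = |deriv g x| * (1 - d) * (1 - d)⁻¹ := by field_simp
    _ ≤ 1 * (1 - d)⁻¹ := mul_le_mul_of_nonneg_right habs (by positivity)
    _ = (1 - d)⁻¹ := one_mul _

private lemma key_identity (p : ℕ) (hp : 1 ≤ p) {l g : ℝ → ℝ}
    (hl : ContDiff ℝ (p + 1 : ℕ) l) (hg : ContDiff ℝ (p + 1 : ℕ) g)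
    (hid : ∀ x, g x + l (g x) = x) (x : ℝ) :
    iteratedDeriv (p + 1) g x = -(iteratedDeriv p (fun y => deriv l (g y) * deriv g y) x) := by
  have hone : (1 : WithTop ℕ∞) ≤ (p + 1 : ℕ) := by exact_mod_cast Nat.succ_le_succ p.zero_le
  have hdl : Differentiable ℝ l := hl.differentiable (by exact_mod_cast p.succ_ne_zero)
  have hdg : Differentiable ℝ g := hg.differentiable (by exact_mod_cast p.succ_ne_zero)
  have hcomp : (fun y => l (g y)) = fun y => y - g y := funext fun y => by
    have := hid y; linarith
  have hderiv_comp : deriv (fun y => l (g y)) = fun y => deriv l (g y) * deriv g y :=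
    funext fun y => ((hdl (g y)).hasDerivAt.comp y (hdg y).hasDerivAt).deriv
  have h1 : iteratedDeriv p (fun y => deriv l (g y) * deriv g y) x
      = iteratedDeriv (p + 1) (fun y => l (g y)) x := by
    rw [iteratedDeriv_succ', hderiv_comp]
  have h2 : iteratedDeriv (p + 1) (fun y => l (g y)) x
      = iteratedDeriv (p + 1) (fun y : ℝ => y) x - iteratedDeriv (p + 1) g x := by
    rw [hcomp]
    have hsub : (fun y : ℝ => y - g y) = ((fun y : ℝ => y) - g) := rfl
    rw [hsub]
    have := iteratedDerivWithin_sub (Set.mem_univ x) uniqueDiffOn_univ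
      (f := fun y : ℝ => y) (g := g) (n := p + 1)
      (contDiff_id.contDiffWithinAt) (hg.contDiffWithinAt)
    simpa [iteratedDerivWithin_univ] using this
  have h3 : iteratedDeriv (p + 1) (fun y : ℝ => y) x = 0 := by
    rw [itd_id (p + 1) (by omega)]
  rw [h1, h2, h3]; ring

private lemma leibniz_step (p : ℕ) (hp : 1 ≤ p) (d C D : ℝ) (hd0 : 0 ≤ d) (hd : d < 1)
    (hC : 0 ≤ C) (hD1 : 1 ≤ D) (Bf : ℕ → ℝ) (hBf0 : ∀ k, 0 ≤ Bf k)
    (l g : ℝ → ℝ) (hl : ContDiff ℝ (p + 1 : ℕ) l) (hg : ContDiff ℝ (p + 1 : ℕ) g)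
    (hld : ∀ x, |deriv l x| ≤ d)
    (hlC : ∀ k x, 1 ≤ k → k ≤ p + 1 → |iteratedDeriv k l x| ≤ C)
    (hgB : ∀ k x, 1 ≤ k → k ≤ p → |iteratedDeriv k g x| ≤ Bf k)
    (hgD : ∀ k, 1 ≤ k → k ≤ p → Bf k ≤ D)
    (hid : ∀ x, g x + l (g x) = x) (x : ℝ) :
    |iteratedDeriv (p + 1) g x| ≤ (1 - d)⁻¹ *
      ∑ i ∈ Finset.range p, (p.choose (i + 1) : ℝ) *
        (((i + 1).factorial : ℝ) * C * D ^ (i + 1)) * Bf (p - i) := by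
  have hA : |iteratedDeriv (p + 1) g x|
      = |iteratedDeriv p (fun y => deriv l (g y) * deriv g y) x| := by
    rw [key_identity p hp hl hg hid x, abs_neg]
  have hdl : ContDiff ℝ (p : ℕ) (deriv l) := contdiff_deriv_of hl
  have hdg : ContDiff ℝ (p : ℕ) (deriv g) := contdiff_deriv_of hg
  have hgp : ContDiff ℝ (p : ℕ) g := hg.of_le (by exact_mod_cast Nat.le_succ p)
  have hu : ContDiff ℝ (p : ℕ) (fun y => deriv l (g y)) := hdl.comp hgp
  have hleib := norm_iteratedFDeriv_mul_le (𝕜 := ℝ) hu hdg x (le_refl _)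
  simp only [norm_iteratedFDeriv_eq_norm_iteratedDeriv, Real.norm_eq_abs] at hleib
  have hleib' : |iteratedDeriv p (fun y => deriv l (g y) * deriv g y) x| ≤
      ∑ i ∈ Finset.range (p + 1), (p.choose i : ℝ) *
        |iteratedDeriv i (fun y => deriv l (g y)) x| * |iteratedDeriv (p - i) (deriv g) x| :=
    hleib
  rw [Finset.sum_range_succ'] at hleib'
  have hzero : (p.choose 0 : ℝ) * |iteratedDeriv 0 (fun y => deriv l (g y)) x| *
      |iteratedDeriv (p - 0) (deriv g) x| ≤ d * |iteratedDeriv (p + 1) g x| := by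
    simp only [Nat.choose_zero_right, Nat.cast_one, one_mul, iteratedDeriv_zero, Nat.sub_zero]
    have h2 : |iteratedDeriv p (deriv g) x| = |iteratedDeriv (p + 1) g x| := by
      rw [iteratedDeriv_succ']
    rw [h2]
    exact mul_le_mul_of_nonneg_right (hld (g x)) (abs_nonneg _)
  have hterm : ∀ i ∈ Finset.range p,
      (p.choose (i + 1) : ℝ) * |iteratedDeriv (i + 1) (fun y => deriv l (g y)) x| *
        |iteratedDeriv (p - (i + 1)) (deriv g) x| ≤
      (p.choose (i + 1) : ℝ) * (((i + 1).factorial : ℝ) * C * D ^ (i + 1)) * Bf (p - i) := by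
    intro i hi
    have hip : i + 1 ≤ p := Nat.succ_le_of_lt (Finset.mem_range.mp hi)
    have hcomp : |iteratedDeriv (i + 1) (fun y => deriv l (g y)) x| ≤
        ((i + 1).factorial : ℝ) * C * D ^ (i + 1) := by
      have hcast : ((i + 1 : ℕ) : WithTop ℕ∞) ≤ (p : ℕ) := by exact_mod_cast hip
      have h1 : ‖iteratedFDeriv ℝ (i + 1) (deriv l ∘ g) x‖ ≤
          ((i + 1).factorial : ℝ) * C * D ^ (i + 1) := by
        refine norm_iteratedFDeriv_comp_le (hdl.of_le hcast) (hgp.of_le hcast) (le_refl _) x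
          (fun k hk => ?_) (fun k hk1 hk2 => ?_)
        · rw [norm_iteratedFDeriv_eq_norm_iteratedDeriv, Real.norm_eq_abs,
            ← iteratedDeriv_succ']
          exact hlC (k + 1) (g x) (Nat.le_add_left 1 k) (by omega)
        · rw [norm_iteratedFDeriv_eq_norm_iteratedDeriv, Real.norm_eq_abs]
          calc |iteratedDeriv k g x| ≤ Bf k := hgB k x hk1 (le_trans hk2 hip)
            _ ≤ D := hgD k hk1 (le_trans hk2 hip)
            _ ≤ D ^ k := le_self_pow₀ hD1 (by omega)
      rw [norm_iteratedFDeriv_eq_norm_iteratedDeriv, Real.norm_eq_abs] at h1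
      exact h1
    have hv : |iteratedDeriv (p - (i + 1)) (deriv g) x| ≤ Bf (p - i) := by
      have heq : iteratedDeriv (p - (i + 1)) (deriv g) x = iteratedDeriv (p - i) g x := by
        rw [← iteratedDeriv_succ', show p - (i + 1) + 1 = p - i by omega]
      rw [heq]
      exact hgB (p - i) x (by omega) (by omega)
    calc (p.choose (i + 1) : ℝ) * |iteratedDeriv (i + 1) (fun y => deriv l (g y)) x| *
          |iteratedDeriv (p - (i + 1)) (deriv g) x|
        ≤ (p.choose (i + 1) : ℝ) * (((i + 1).factorial : ℝ) * C * D ^ (i + 1)) *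
          |iteratedDeriv (p - (i + 1)) (deriv g) x| := by
          apply mul_le_mul_of_nonneg_right (mul_le_mul_of_nonneg_left hcomp (by positivity))
            (abs_nonneg _)
      _ ≤ (p.choose (i + 1) : ℝ) * (((i + 1).factorial : ℝ) * C * D ^ (i + 1)) * Bf (p - i) := by
          apply mul_le_mul_of_nonneg_left hv (by positivity)
  have hsum := Finset.sum_le_sum hterm
  set R := ∑ i ∈ Finset.range p, (p.choose (i + 1) : ℝ) *
    (((i + 1).factorial : ℝ) * C * D ^ (i + 1)) * Bf (p - i) with hRdef
  have hmain : |iteratedDeriv (p + 1) g x| ≤ R + d * |iteratedDeriv (p + 1) g x| := by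
    refine hA.le.trans (hleib'.trans (add_le_add hsum hzero))
  have h1d : (0 : ℝ) < 1 - d := by linarith
  have hfin : (1 - d) * |iteratedDeriv (p + 1) g x| ≤ R := by nlinarith [hmain]
  calc |iteratedDeriv (p + 1) g x|
      = (1 - d)⁻¹ * ((1 - d) * |iteratedDeriv (p + 1) g x|) := by field_simp
    _ ≤ (1 - d)⁻¹ * R := mul_le_mul_of_nonneg_left hfin (by positivity)

private lemma aux (d M : ℝ) (hd0 : 0 ≤ d) (hd : d < 1) (hM : 0 ≤ M) :
    ∀ m : ℕ, ∃ B : ℝ, 0 ≤ B ∧ ∀ l g : ℝ → ℝ, ContDiff ℝ (m : ℕ) l → ContDiff ℝ (m : ℕ) g →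
      (∀ x, |deriv l x| ≤ d) → (∀ k x, 1 ≤ k → k ≤ m → |iteratedDeriv k l x| ≤ M) →
      (∀ x, g x + l (g x) = x) → 1 ≤ m → ∀ x, |iteratedDeriv m g x| ≤ B := by
  intro m
  induction m using Nat.strong_induction_on with
  | _ m IH =>
    match m with
    | 0 => exact ⟨0, le_refl 0, fun _ _ _ _ _ _ _ h => by omega⟩
    | 1 =>
        have h1d : (0:ℝ) < 1 - d := by linarith
        refine ⟨(1 - d)⁻¹, by positivity, ?_⟩
        intro l g hl hg hld _ hid _ x
        rw [iteratedDeriv_one]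
        exact abs_deriv_g_le hd (hl.differentiable (by simp))
          (hg.differentiable (by simp)) hld hid x
    | (p + 2) =>
        have IH' : ∀ k : ℕ, ∃ B : ℝ, 0 ≤ B ∧ (k < p + 2 →
            ∀ l g : ℝ → ℝ, ContDiff ℝ (k : ℕ) l → ContDiff ℝ (k : ℕ) g →
            (∀ x, |deriv l x| ≤ d) → (∀ j x, 1 ≤ j → j ≤ k → |iteratedDeriv j l x| ≤ M) →
            (∀ x, g x + l (g x) = x) → 1 ≤ k → ∀ x, |iteratedDeriv k g x| ≤ B) := by
          intro k
          by_cases h : k < p + 2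
          · obtain ⟨B, h0, hB⟩ := IH k h
            exact ⟨B, h0, fun _ => hB⟩
          · exact ⟨0, le_refl 0, fun hk => absurd hk h⟩
        choose Bf hBf0 hBf using IH'
        set D : ℝ := max 1 (∑ j ∈ Finset.range (p + 2), Bf j) with hDdef
        have hD1 : (1 : ℝ) ≤ D := le_max_left _ _
        have hgD : ∀ k, 1 ≤ k → k ≤ p + 1 → Bf k ≤ D := by
          intro k _ hk2
          refine le_trans ?_ (le_max_right _ _)
          exact Finset.single_le_sum (f := Bf) (fun j _ => hBf0 j)
            (Finset.mem_range.mpr (by omega))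
        refine ⟨(1 - d)⁻¹ * ∑ i ∈ Finset.range (p + 1), ((p + 1).choose (i + 1) : ℝ) *
          (((i + 1).factorial : ℝ) * M * D ^ (i + 1)) * Bf (p + 1 - i), ?_, ?_⟩
        · have : ∀ i ∈ Finset.range (p + 1), (0:ℝ) ≤ ((p + 1).choose (i + 1) : ℝ) *
              (((i + 1).factorial : ℝ) * M * D ^ (i + 1)) * Bf (p + 1 - i) := by
            intro i _
            exact mul_nonneg (mul_nonneg (Nat.cast_nonneg _) (by positivity)) (hBf0 _)
          have hs := Finset.sum_nonneg this
          have h1d : (0:ℝ) < 1 - d := by linarith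
          exact mul_nonneg (by positivity) hs
        · intro l g hl hg hld hlM hid _ x
          have hgB : ∀ k x', 1 ≤ k → k ≤ p + 1 → |iteratedDeriv k g x'| ≤ Bf k := by
            intro k x' h1 h2
            refine hBf k (by omega) l g (hl.of_le ?_) (hg.of_le ?_) hld
              (fun j xx hj1 hj2 => hlM j xx hj1 (by omega)) hid h1 x'
            · exact_mod_cast (by omega : k ≤ p + 2)
            · exact_mod_cast (by omega : k ≤ p + 2)
          exact leibniz_step (p + 1) (by omega) d M D hd0 hd hM hD1 Bf hBf0 l g hl hg hld
            (fun k xx h1 h2 => hlM k xx h1 (by omega)) hgB hgD hid x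




/-- Bound on the n-th derivative of the inverse of `I + λ`, for a 1-periodic C^n
function `λ` with `‖∂ₓλ‖_∞ ≤ d < 1`: there is a constant `c` depending only on `n`,
`d` and `‖∂ₓ^{n-1}λ‖_∞` (bounded by `K`) with `‖∂ₓⁿ(I+λ)^{-1}‖_∞ ≤ c‖∂ₓⁿλ‖_∞`. -/
theorem deriv_inverse_id_add_bound (n : ℕ) (hn : 2 ≤ n) (d : ℝ)
    (hd0 : 0 ≤ d) (hd : d < 1) (K : ℝ) :
    ∃ c : ℝ, ∀ l : ℝ → ℝ, ContDiff ℝ n l → Function.Periodic l 1 →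
      (∀ x, |deriv l x| ≤ d) →
      (⨆ x : ℝ, |iteratedDeriv (n - 1) l x|) ≤ K →
      ∀ g : ℝ → ℝ, ContDiff ℝ n g →
        Function.LeftInverse g (fun x => x + l x) →
        Function.RightInverse g (fun x => x + l x) →
        ∀ x : ℝ, |iteratedDeriv n g x| ≤ c * ⨆ y : ℝ, |iteratedDeriv n l y| := by
  set M : ℝ := max K 0 with hMdef
  have hM : 0 ≤ M := le_max_right _ _
  choose Bf hBf0 hBf using aux d M hd0 hd hM
  obtain ⟨p, rfl⟩ : ∃ p, n = p + 1 := ⟨n - 1, by omega⟩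
  have hp : 1 ≤ p := by omega
  set D : ℝ := max 1 (∑ j ∈ Finset.range (p + 1), Bf j) with hDdef
  have hD1 : (1 : ℝ) ≤ D := le_max_left _ _
  have hgD : ∀ k, 1 ≤ k → k ≤ p → Bf k ≤ D := by
    intro k _ h2
    refine le_trans ?_ (le_max_right _ _)
    exact Finset.single_le_sum (f := Bf) (fun j _ => hBf0 j) (Finset.mem_range.mpr (by omega))
  refine ⟨(1 - d)⁻¹ * ∑ i ∈ Finset.range p, (p.choose (i + 1) : ℝ) *
    (((i + 1).factorial : ℝ) * D ^ (i + 1)) * Bf (p - i), ?_⟩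
  intro l hl hper hld hK g hg _ hr x
  have hid : ∀ y, g y + l (g y) = y := fun y => hr y
  have hScont : Continuous (iteratedDeriv (p + 1) l) := by
    have : ContDiff ℝ (0 : ℕ) (iteratedDeriv (p + 1) l) :=
      contdiff_itd (hl.of_le (by exact_mod_cast (by omega : 0 + (p + 1) ≤ p + 1)))
    exact this.continuous
  have hbddS : BddAbove (Set.range fun y => |iteratedDeriv (p + 1) l y|) :=
    bdd_abs hScont (periodic_itd hper (p + 1))
  set S := ⨆ y, |iteratedDeriv (p + 1) l y| with hSdef
  have hS0 : 0 ≤ S := le_trans (abs_nonneg _) (le_ciSup hbddS 0)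
  have hSk : ∀ k xx, 1 ≤ k → k ≤ p + 1 → |iteratedDeriv k l xx| ≤ S :=
    fun k xx h1 h2 => chain hl hper k (p + 1) h1 h2 (le_refl _) xx
  have hKp : (⨆ y, |iteratedDeriv p l y|) ≤ K := by simpa using hK
  have hlM : ∀ k xx, 1 ≤ k → k ≤ p → |iteratedDeriv k l xx| ≤ M := by
    intro k xx h1 h2
    calc |iteratedDeriv k l xx| ≤ ⨆ y, |iteratedDeriv p l y| :=
          chain hl hper k p h1 h2 (by omega) xx
      _ ≤ K := hKp
      _ ≤ M := le_max_left _ _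
  have hgB : ∀ k xx, 1 ≤ k → k ≤ p → |iteratedDeriv k g xx| ≤ Bf k := by
    intro k xx h1 h2
    exact hBf k l g (hl.of_le (by exact_mod_cast (by omega : k ≤ p + 1)))
      (hg.of_le (by exact_mod_cast (by omega : k ≤ p + 1))) hld
      (fun j yy hj1 hj2 => hlM j yy hj1 (by omega)) hid h1 xx
  have hstep := leibniz_step p hp d S D hd0 hd hS0 hD1 Bf hBf0 l g hl hg hld hSk hgB hgD hid x
  refine hstep.trans (le_of_eq ?_)
  simp only [Finset.mul_sum, Finset.sum_mul]
  exact Finset.sum_congr rfl fun i _ => by ring
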